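/- Let $L$ be a module lattice of rank $n$ over a number field $K$ of degree $d$ (with discriminant $\Delta_K$), viewed as a Euclidean lattice of rank $nd$, and let $t \ge 1$. If $L$ contains no rank-1 sub-module lattice $L'$ with $(t \cdot \det(L'))^{1/\mathrm{rank}(L')} \le \det(L)^{1/\mathrm{rank}(L)}$ (i.e., no $t$-destabilising rank-1 sublattice in the Grayson–Stuhler sense), then $\lambda_1(L) > t^{-1/d}\,|\Delta_K|^{-1/(2d)}\,\det(L)^{1/(nd)}$. -/

import Mathlib

open scoped NumberField

/-- The `j`-th successive minimum of a set `M` (w.r.t. `R`-linear independence). -/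
noncomputable def succMin (R : Type*) [Semiring R] {V : Type*} [NormedAddCommGroup V]
    [Module R V] (M : Set V) (j : ℕ) : ℝ :=
  sInf {lam : ℝ | 0 < lam ∧ ∃ v : Fin j → V,
    (∀ i, v i ∈ M) ∧ LinearIndependent R v ∧ ∀ i, ‖v i‖ ≤ lam}

/-- Let `L` be a module lattice of rank `n` over a number field
`K` of degree `d` and discriminant `Δ_K`, viewed as a Euclidean lattice of rank
`nd`, and `t ≥ 1`. If `L` has no `t`-destabilising rank-1 sub-module lattice
(for the principal rank-1 sublattice `𝓞_K x`, of determinant `‖x‖^d √|Δ_K|`,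
this means `t ‖x‖^d √|Δ_K| ≤ det(L)^{1/n}` never holds for `x ∈ L` nonzero),
then `λ₁(L) > t^{-1/d} |Δ_K|^{-1/(2d)} det(L)^{1/(nd)}`. -/
theorem stmt16
    {K : Type*} [Field K] [NumberField K]
    {V : Type*} [NormedAddCommGroup V] [InnerProductSpace ℝ V] [FiniteDimensional ℝ V]
    [MeasurableSpace V] [BorelSpace V]
    [Module (𝓞 K) V]
    (μ : MeasureTheory.Measure V) [μ.IsAddHaarMeasure]
    (n : ℕ) (hn : 0 < n)
    (hdim : Module.finrank ℝ V = n * Module.finrank ℚ K)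
    (L : Submodule (𝓞 K) V)
    [DiscreteTopology (L.restrictScalars ℤ)] [IsZLattice ℝ (L.restrictScalars ℤ)]
    (t : ℝ) (ht : 1 ≤ t)
    (hstab : ∀ x ∈ L, x ≠ 0 →
      ¬ (t * (‖x‖ ^ Module.finrank ℚ K * Real.sqrt |(NumberField.discr K : ℝ)|) ≤
          ZLattice.covolume (L.restrictScalars ℤ) μ ^ ((1 : ℝ) / (n : ℝ)))) :
    t ^ (-(1 : ℝ) / (Module.finrank ℚ K : ℝ)) *
        |(NumberField.discr K : ℝ)| ^ (-(1 : ℝ) / (2 * (Module.finrank ℚ K : ℝ))) *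
        ZLattice.covolume (L.restrictScalars ℤ) μ ^
          ((1 : ℝ) / ((n * Module.finrank ℚ K : ℕ) : ℝ)) <
      succMin ℝ (L : Set V) 1 := by
  classical
  set d : ℕ := Module.finrank ℚ K with hd
  have hd1 : 0 < d := Module.finrank_pos
  have hdR : (0:ℝ) < (d:ℝ) := by exact_mod_cast hd1
  set D : ℝ := ZLattice.covolume (L.restrictScalars ℤ) μ with hDdef
  have hDpos : 0 < D := ZLattice.covolume_pos _ μ
  set Δ : ℝ := |(NumberField.discr K : ℝ)| with hΔdef
  have hΔpos : (0:ℝ) < Δ := by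
    rw [hΔdef, abs_pos]
    exact_mod_cast NumberField.discr_ne_zero K
  have ht0 : (0:ℝ) < t := lt_of_lt_of_le one_pos ht
  set c : ℝ := t ^ (-(1 : ℝ) / (d : ℝ)) * Δ ^ (-(1 : ℝ) / (2 * (d : ℝ))) *
      D ^ ((1 : ℝ) / ((n * d : ℕ) : ℝ)) with hcdef
  have hcpos : 0 < c := by
    apply mul_pos (mul_pos _ _) _
    · exact Real.rpow_pos_of_pos ht0 _
    · exact Real.rpow_pos_of_pos hΔpos _
    · exact Real.rpow_pos_of_pos hDpos _
  -- compute `t * (c ^ d * √Δ) = D ^ (1/n)`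
  have hcd : t * (c ^ d * Real.sqrt Δ) = D ^ ((1:ℝ) / (n:ℝ)) := by
    have hnd : ((n * d : ℕ) : ℝ) = (n : ℝ) * (d : ℝ) := by push_cast; ring
    rw [hcdef, ← Real.rpow_natCast
        (t ^ (-(1 : ℝ) / (d : ℝ)) * Δ ^ (-(1 : ℝ) / (2 * (d : ℝ))) *
          D ^ ((1 : ℝ) / ((n * d : ℕ) : ℝ))) d,
      Real.mul_rpow (by positivity) (by positivity),
      Real.mul_rpow (by positivity) (by positivity),
      ← Real.rpow_mul ht0.le, ← Real.rpow_mul hΔpos.le, ← Real.rpow_mul hDpos.le,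
      Real.sqrt_eq_rpow, hnd]
    have e1 : -(1:ℝ) / (d:ℝ) * (d:ℝ) = -1 := by field_simp
    have e2 : -(1:ℝ) / (2 * (d:ℝ)) * (d:ℝ) = -(1/2) := by field_simp
    have e3 : (1:ℝ) / ((n:ℝ) * (d:ℝ)) * (d:ℝ) = 1 / (n:ℝ) := by
      have hnR : (0:ℝ) < (n:ℝ) := by exact_mod_cast hn
      field_simp
    rw [e1, e2, e3]
    have h1 : Δ ^ (-(1/2):ℝ) * Δ ^ ((1:ℝ)/2) = 1 := by
      rw [← Real.rpow_add hΔpos]; norm_num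
    have h2 : t * t ^ (-1:ℝ) = 1 := by
      rw [Real.rpow_neg_one]; field_simp
    calc t * (t ^ (-1:ℝ) * Δ ^ (-(1/2):ℝ) * D ^ ((1:ℝ)/(n:ℝ)) * Δ ^ ((1:ℝ)/2))
        = (t * t ^ (-1:ℝ)) * (Δ ^ (-(1/2):ℝ) * Δ ^ ((1:ℝ)/2)) * D ^ ((1:ℝ)/(n:ℝ)) := by ring
      _ = D ^ ((1:ℝ)/(n:ℝ)) := by rw [h1, h2, one_mul, one_mul]
  -- every nonzero lattice vector is strictly longer than `c`
  have key : ∀ x ∈ L, x ≠ 0 → c < ‖x‖ := by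
    intro x hx hx0
    by_contra hcon
    push_neg at hcon
    refine hstab x hx hx0 ?_
    rw [← hcd]
    have : ‖x‖ ^ d ≤ c ^ d := pow_le_pow_left₀ (norm_nonneg x) hcon d
    have hs : (0:ℝ) ≤ Real.sqrt Δ := Real.sqrt_nonneg _
    nlinarith [Real.sqrt_nonneg Δ, mul_le_mul_of_nonneg_right this hs]
  -- discreteness / closedness of the lattice as a set
  haveI hdisc : DiscreteTopology ((L : Set V) : Set V) :=
    (inferInstance : DiscreteTopology (L.restrictScalars ℤ))
  haveI : DiscreteTopology ((L.restrictScalars ℤ).toAddSubgroup) :=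
    (inferInstance : DiscreteTopology (L.restrictScalars ℤ))
  have hclosed : IsClosed ((L : Set V)) :=
    AddSubgroup.isClosed_of_discrete (H := (L.restrictScalars ℤ).toAddSubgroup)
  -- there is a nonzero lattice vector
  obtain ⟨x₁, hx₁L, hx₁0⟩ : ∃ x ∈ L, x ≠ 0 := by
    by_contra hcon
    push_neg at hcon
    have hbot : (L.restrictScalars ℤ : Set V) ⊆ {0} := fun x hx => hcon x hx
    have hspan : Submodule.span ℝ (L.restrictScalars ℤ : Set V) = ⊤ :=
      IsZLattice.span_top
    have : (⊤ : Submodule ℝ V) ≤ ⊥ := by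
      rw [← hspan]
      refine Submodule.span_le.2 ?_
      intro x hx
      simp [hbot hx]
    have hVtriv : ∀ v : V, v = 0 := fun v => by
      simpa using this (Submodule.mem_top (x := v))
    have : Nontrivial V := Module.nontrivial_of_finrank_pos (R := ℝ)
      (by rw [hdim]; positivity)
    obtain ⟨a, b, hab⟩ := this
    exact hab ((hVtriv a).trans (hVtriv b).symm)
  -- the set of nonzero lattice vectors of norm ≤ ‖x₁‖ is finite and nonempty
  set T : Set V := (Metric.closedBall (0:V) ‖x₁‖ ∩ (L : Set V)) \ {0} with hTdef
  have hTfin : T.Finite :=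
    ((Metric.finite_isBounded_inter_isClosed (K := Metric.closedBall (0:V) ‖x₁‖)
      (s := (L : Set V)) DiscreteTopology.isDiscrete Metric.isBounded_closedBall hclosed).subset Set.diff_subset)
  have hx₁T : x₁ ∈ T := by
    refine ⟨⟨?_, hx₁L⟩, hx₁0⟩
    simp [Metric.mem_closedBall, dist_zero_right]
  -- obtain a vector of minimal norm
  obtain ⟨x₀, hx₀T, hx₀min⟩ := Set.exists_min_image T (fun x => ‖x‖) hTfin ⟨x₁, hx₁T⟩
  obtain ⟨⟨hx₀ball, hx₀L⟩, hx₀0⟩ := hx₀T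
  have hx₀ne : x₀ ≠ 0 := hx₀0
  have hmin : ∀ x ∈ L, x ≠ 0 → ‖x₀‖ ≤ ‖x‖ := by
    intro x hx hx0
    by_cases hxb : ‖x‖ ≤ ‖x₁‖
    · exact hx₀min x ⟨⟨by simpa [Metric.mem_closedBall, dist_zero_right] using hxb, hx⟩, hx0⟩
    · exact le_trans (hx₀min x₁ hx₁T) (le_of_not_ge hxb)
  -- conclude
  have hlb : c < ‖x₀‖ := key x₀ hx₀L hx₀ne
  refine lt_of_lt_of_le hlb ?_
  unfold succMin
  refine le_csInf ⟨‖x₀‖, norm_pos_iff.2 hx₀ne, fun _ => x₀, fun _ => hx₀L, ?_, fun _ => le_rfl⟩ ?_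
  · exact linearIndependent_unique_iff.2 hx₀ne
  · rintro lam ⟨hlam0, v, hvL, hvli, hvle⟩
    have hv0 : v 0 ≠ 0 := hvli.ne_zero 0
    exact le_trans (hmin (v 0) (hvL 0) hv0) (hvle 0)
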